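/- Let G=(V,E) be a redundant-free st-DAG with at least two vertices, with source s and target t. Then the set of all edges of E with start vertex s is a Maximum Syncpoint, and the set of all edges of E with end vertex t is a Maximum Syncpoint. -/

import Mathlib

open Set

variable {V : Type*}

/-- Predecessor set of a vertex. -/
def preds (E : Set (V × V)) (v : V) : Set V := {u | (u, v) ∈ E}

/-- Successor set of a vertex. -/
def succs (E : Set (V × V)) (u : V) : Set V := {w | (u, w) ∈ E}

/-- A digraph is acyclic: no vertex lies on a nonempty directed cycle. -/
def IsAcyclicDigraph (E : Set (V × V)) : Prop :=
  ∀ v : V, ¬ Relation.TransGen (fun a b => (a, b) ∈ E) v v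

/-- `s` is the unique vertex with no incoming edge. -/
def IsSourceOf (E : Set (V × V)) (s : V) : Prop :=
  preds E s = ∅ ∧ ∀ v, preds E v = ∅ → v = s

/-- `t` is the unique vertex with no outgoing edge. -/
def IsTargetOf (E : Set (V × V)) (t : V) : Prop :=
  succs E t = ∅ ∧ ∀ v, succs E v = ∅ → v = t

/-- A set of in-twins: all elements have the identical set of predecessors. -/
def InTwins (E : Set (V × V)) (S : Set V) : Prop :=
  ∀ v ∈ S, ∀ w ∈ S, preds E v = preds E w

/-- A set of out-twins: all elements have the identical set of successors. -/
def OutTwins (E : Set (V × V)) (P : Set V) : Prop :=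
  ∀ u ∈ P, ∀ w ∈ P, succs E u = succs E w

/-- `P_X`: the set of start vertices of the edges of `X`. -/
def startSet (X : Set (V × V)) : Set V := {u | ∃ v, (u, v) ∈ X}

/-- `S_X`: the set of end vertices of the edges of `X`. -/
def endSet (X : Set (V × V)) : Set V := {v | ∃ u, (u, v) ∈ X}

/-- Condition (a) of the syncpoint definition. -/
def CondA (E X : Set (V × V)) : Prop :=
  (∀ u ∈ startSet X, ∀ v ∈ endSet X, (u, v) ∈ E → (u, v) ∈ X) ∧
  ((endSet X).ncard = 1 ∨ InTwins E (endSet X)) ∧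
  (∀ v ∈ endSet X, preds E v = startSet X)

/-- Condition (b) of the syncpoint definition. -/
def CondB (E X : Set (V × V)) : Prop :=
  (∀ u ∈ startSet X, ∀ v ∈ endSet X, (u, v) ∈ E → (u, v) ∈ X) ∧
  ((startSet X).ncard = 1 ∨ OutTwins E (startSet X)) ∧
  (∀ u ∈ startSet X, succs E u = endSet X)

/-- Fullsyncpoint: a nonempty edge set satisfying both (a) and (b). -/
def IsFSP (E X : Set (V × V)) : Prop :=
  X.Nonempty ∧ X ⊆ E ∧ CondA E X ∧ CondB E X

/-- Forward-Halfsyncpoint: (a) holds and `|S_X| ≥ 2`. -/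
def IsFHSP (E X : Set (V × V)) : Prop :=
  X.Nonempty ∧ X ⊆ E ∧ CondA E X ∧ 2 ≤ (endSet X).ncard

/-- Backward-Halfsyncpoint: (b) holds and `|P_X| ≥ 2`. -/
def IsBHSP (E X : Set (V × V)) : Prop :=
  X.Nonempty ∧ X ⊆ E ∧ CondB E X ∧ 2 ≤ (startSet X).ncard

/-- A syncpoint is an FSP, FHSP or BHSP. -/
def IsSyncpoint (E X : Set (V × V)) : Prop :=
  IsFSP E X ∨ IsFHSP E X ∨ IsBHSP E X

/-- Maximum Syncpoint: a syncpoint that is not a proper subset of another syncpoint. -/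
def IsMSP (E X : Set (V × V)) : Prop :=
  IsSyncpoint E X ∧ ∀ Y, IsSyncpoint E Y → ¬ X ⊂ Y

/-- An edge-path: a nonempty list of edges, consecutive edges sharing endpoints. -/
def IsEdgePath (E : Set (V × V)) (p : List (V × V)) : Prop :=
  p ≠ [] ∧ (∀ e ∈ p, e ∈ E) ∧ p.Chain' (fun e f => e.2 = f.1)

/-- The vertex-path of an edge-path. -/
def vertexPath (p : List (V × V)) : List V :=
  match p with
  | [] => []
  | e :: rest => e.1 :: (e :: rest).map Prod.snd

/-- An st-path: an edge-path starting at `s` and ending at `t`. -/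
def IsStPath (E : Set (V × V)) (s t : V) (p : List (V × V)) : Prop :=
  IsEdgePath E p ∧ (∃ e, p.head? = some e ∧ e.1 = s) ∧
    (∃ e, p.getLast? = some e ∧ e.2 = t)

/-- An edge `(u,v) ∈ E` is redundant if there is a directed path from `u` to `v`
not containing the edge `(u,v)`. -/
def IsRedundant (E : Set (V × V)) (e : V × V) : Prop :=
  e ∈ E ∧ ∃ p, IsEdgePath E p ∧ e ∉ p ∧
    (∃ f, p.head? = some f ∧ f.1 = e.1) ∧ (∃ f, p.getLast? = some f ∧ f.2 = e.2)

/-- A graph is redundant-free if it has no redundant edge. -/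
def RedundantFree (E : Set (V × V)) : Prop := ∀ e, ¬ IsRedundant E e

/-- Entry vertices of the subgraph induced by `V'` (in an st-DAG with source `s`). -/
def entrySet (E : Set (V × V)) (s : V) (V' : Set V) : Set V :=
  {v | v ∈ V' ∧ ((∃ u, u ∉ V' ∧ (u, v) ∈ E) ∨ v = s)}

/-- Exit vertices of the subgraph induced by `V'` (in an st-DAG with target `t`). -/
def exitSet (E : Set (V × V)) (t : V) (V' : Set V) : Set V :=
  {v | v ∈ V' ∧ ((∃ w, w ∉ V' ∧ (v, w) ∈ E) ∨ v = t)}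

/-- The induced subgraph of `V'` is a cluster. -/
def IsCluster (E : Set (V × V)) (s t : V) (V' : Set V) : Prop :=
  2 ≤ (entrySet E s V').ncard ∧ 2 ≤ (exitSet E t V').ncard ∧
  entrySet E s V' ∩ exitSet E t V' = ∅ ∧
  InTwins E (entrySet E s V') ∧ OutTwins E (exitSet E t V')



section AuxMSP
variable {V : Type*}

private lemma auxMSP_wf [Finite V] {E : Set (V × V)} (hacyc : IsAcyclicDigraph E) :
    WellFounded (fun a b : V => (a, b) ∈ E) := by
  have hirr : IsIrrefl V (Relation.TransGen (fun a b : V => (a, b) ∈ E)) := ⟨hacyc⟩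
  exact Subrelation.wf (fun h => Relation.TransGen.single h)
    (Finite.wellFounded_of_trans_of_irrefl (Relation.TransGen (fun a b : V => (a, b) ∈ E)))

private lemma auxMSP_wf' [Finite V] {E : Set (V × V)} (hacyc : IsAcyclicDigraph E) :
    WellFounded (fun a b : V => (b, a) ∈ E) := by
  have hirr : IsIrrefl V (Relation.TransGen (fun a b : V => (b, a) ∈ E)) := by
    constructor
    intro v hv
    exact hacyc v ((Relation.transGen_swap).mpr hv)
  exact Subrelation.wf (fun h => Relation.TransGen.single h)
    (Finite.wellFounded_of_trans_of_irrefl (Relation.TransGen (fun a b : V => (b, a) ∈ E)))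

private lemma auxMSP_path_append {E : Set (V × V)} {p : List (V × V)} {b c : V}
    (hp : IsEdgePath E p) (hlast : ∃ f, p.getLast? = some f ∧ f.2 = b)
    (hbc : (b, c) ∈ E) :
    IsEdgePath E (p ++ [(b, c)]) ∧ (p ++ [(b, c)]).head? = p.head? ∧
      (p ++ [(b, c)]).getLast? = some (b, c) := by
  obtain ⟨hne, hmem, hch⟩ := hp
  obtain ⟨f, hf, hf2⟩ := hlast
  refine ⟨⟨by simp, ?_, ?_⟩, ?_, List.getLast?_concat⟩
  · intro e he
    rcases List.mem_append.mp he with h | h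
    · exact hmem e h
    · simp at h; subst h; exact hbc
  · rw [List.Chain', List.isChain_append]
    refine ⟨hch, List.isChain_singleton _, ?_⟩
    intro x hx y hy
    simp only [List.head?_cons, Option.mem_some_iff] at hy
    rw [hf] at hx
    simp only [Option.mem_some_iff] at hx
    subst hx; subst hy
    simpa using hf2
  · cases p with
    | nil => simp at hne
    | cons a as => simp

private lemma auxMSP_path_cons {E : Set (V × V)} {p : List (V × V)} {a b : V}
    (hp : IsEdgePath E p) (hhead : ∃ f, p.head? = some f ∧ f.1 = b)
    (hab : (a, b) ∈ E) :
    IsEdgePath E ((a, b) :: p) ∧ ((a, b) :: p).head? = some (a, b) ∧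
      ((a, b) :: p).getLast? = p.getLast? := by
  obtain ⟨hne, hmem, hch⟩ := hp
  obtain ⟨f, hf, hf1⟩ := hhead
  cases p with
  | nil => simp at hne
  | cons x xs =>
    simp only [List.head?_cons, Option.some.injEq] at hf
    subst hf
    refine ⟨⟨by simp, ?_, ?_⟩, rfl, List.getLast?_cons_cons⟩
    · intro e he
      rcases List.mem_cons.mp he with h | h
      · subst h; exact hab
      · exact hmem e h
    · rw [List.Chain', List.isChain_cons_cons]
      exact ⟨hf1.symm, hch⟩

private lemma auxMSP_reach_last {E : Set (V × V)} (p : List (V × V)) :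
    (∀ e ∈ p, e ∈ E) → p.Chain' (fun e f => e.2 = f.1) →
    ∀ b, p.getLast? = some b → ∀ e ∈ p,
      Relation.ReflTransGen (fun a c : V => (a, c) ∈ E) e.2 b.2 := by
  induction p with
  | nil => simp
  | cons x xs ih =>
    intro hmem hch b hb e he
    cases xs with
    | nil =>
      simp only [List.getLast?_singleton, Option.some.injEq] at hb
      simp only [List.mem_singleton] at he
      subst hb; subst he
      exact Relation.ReflTransGen.refl
    | cons y ys =>
      have hch' := List.isChain_cons_cons.mp hch
      rw [List.getLast?_cons_cons] at hb
      have hmem' : ∀ e ∈ y :: ys, e ∈ E := fun e he => hmem e (by simp [he])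
      rcases List.mem_cons.mp he with he | he
      · have h1 := ih hmem' hch'.2 b hb y (by simp)
        refine Relation.ReflTransGen.head (show (e.2, y.2) ∈ E from ?_) h1
        have hxy : e.2 = y.1 := by rw [he]; exact hch'.1
        rw [hxy]
        simpa using hmem' y (by simp)
      · exact ih hmem' hch'.2 b hb e he

private lemma auxMSP_reach_head {E : Set (V × V)} (p : List (V × V)) :
    (∀ e ∈ p, e ∈ E) → p.Chain' (fun e f => e.2 = f.1) →
    ∀ b, p.head? = some b → ∀ e ∈ p,
      Relation.ReflTransGen (fun a c : V => (a, c) ∈ E) b.1 e.1 := by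
  induction p with
  | nil => simp
  | cons x xs ih =>
    intro hmem hch b hb e he
    simp only [List.head?_cons, Option.some.injEq] at hb
    subst hb
    rcases List.mem_cons.mp he with he | he
    · subst he; exact Relation.ReflTransGen.refl
    · cases xs with
      | nil => simp at he
      | cons y ys =>
        have hch' := List.isChain_cons_cons.mp hch
        have hmem' : ∀ e ∈ y :: ys, e ∈ E := fun e he => hmem e (by simp [he])
        have h1 := ih hmem' hch'.2 y rfl e he
        refine Relation.ReflTransGen.head ?_ h1
        show (x.1, y.1) ∈ E
        rw [← hch'.1]
        simpa using hmem x (by simp)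

private lemma auxMSP_reach_from_s [Finite V] {E : Set (V × V)} {s : V}
    (hacyc : IsAcyclicDigraph E) (hs : IsSourceOf E s) :
    ∀ v, v ≠ s → ∃ p, IsEdgePath E p ∧ (∃ f, p.head? = some f ∧ f.1 = s) ∧
      (∃ f, p.getLast? = some f ∧ f.2 = v) := by
  intro v
  refine (auxMSP_wf hacyc).induction
    (C := fun v => v ≠ s → ∃ p, IsEdgePath E p ∧ (∃ f, p.head? = some f ∧ f.1 = s) ∧
      ∃ f, p.getLast? = some f ∧ f.2 = v) v ?_
  intro v ih hv
  · have hne : preds E v ≠ ∅ := fun h => hv (hs.2 v h)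
    obtain ⟨u, hu⟩ := Set.nonempty_iff_ne_empty.mpr hne
    have hu' : (u, v) ∈ E := hu
    by_cases hus : u = s
    · exact ⟨[(u, v)], ⟨by simp, by simpa using hu', List.isChain_singleton _⟩,
        ⟨(u, v), by simp, hus⟩, ⟨(u, v), by simp⟩⟩
    · obtain ⟨p, hp, hh, hl⟩ := ih u hu' hus
      obtain ⟨hp2, hh2, hl2⟩ := auxMSP_path_append hp hl hu'
      refine ⟨p ++ [(u, v)], hp2, ?_, ⟨(u, v), hl2, rfl⟩⟩
      obtain ⟨f, hf, hfs⟩ := hh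
      exact ⟨f, by rw [hh2, hf], hfs⟩

private lemma auxMSP_reach_to_t [Finite V] {E : Set (V × V)} {t : V}
    (hacyc : IsAcyclicDigraph E) (ht : IsTargetOf E t) :
    ∀ v, v ≠ t → ∃ p, IsEdgePath E p ∧ (∃ f, p.head? = some f ∧ f.1 = v) ∧
      (∃ f, p.getLast? = some f ∧ f.2 = t) := by
  intro v
  refine (auxMSP_wf' hacyc).induction
    (C := fun v => v ≠ t → ∃ p, IsEdgePath E p ∧ (∃ f, p.head? = some f ∧ f.1 = v) ∧
      ∃ f, p.getLast? = some f ∧ f.2 = t) v ?_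
  intro v ih hv
  · have hne : succs E v ≠ ∅ := fun h => hv (ht.2 v h)
    obtain ⟨w, hw⟩ := Set.nonempty_iff_ne_empty.mpr hne
    have hw' : (v, w) ∈ E := hw
    by_cases hwt : w = t
    · exact ⟨[(v, w)], ⟨by simp, by simpa using hw', List.isChain_singleton _⟩,
        ⟨(v, w), by simp⟩, ⟨(v, w), by simp, hwt⟩⟩
    · obtain ⟨p, hp, hh, hl⟩ := ih w hw' hwt
      obtain ⟨hp2, hh2, hl2⟩ := auxMSP_path_cons hp hh hw'
      refine ⟨(v, w) :: p, hp2, ⟨(v, w), hh2, rfl⟩, ?_⟩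
      obtain ⟨f, hf, hfs⟩ := hl
      exact ⟨f, by rw [hl2, hf], hfs⟩

private lemma auxMSP_no_other_pred [Finite V] {E : Set (V × V)} {s : V}
    (hacyc : IsAcyclicDigraph E) (hs : IsSourceOf E s) (hred : RedundantFree E)
    {v : V} (hv : (s, v) ∈ E) : ∀ u, (u, v) ∈ E → u = s := by
  intro u hu
  by_contra hus
  obtain ⟨p, hp, hh, hl⟩ := auxMSP_reach_from_s hacyc hs u hus
  obtain ⟨hp2, hh2, hl2⟩ := auxMSP_path_append hp hl hu
  refine hred (s, v) ⟨hv, p ++ [(u, v)], hp2, ?_, ?_, ⟨(u, v), hl2, rfl⟩⟩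
  · intro hmem
    rcases List.mem_append.mp hmem with h | h
    · obtain ⟨f, hf, hf2⟩ := hl
      have hrt := auxMSP_reach_last p hp.2.1 hp.2.2 f hf (s, v) h
      rw [hf2] at hrt
      exact hacyc v (Relation.TransGen.tail' hrt hu)
    · rw [List.mem_singleton, Prod.mk.injEq] at h
      exact hus h.1.symm
  · obtain ⟨f, hf, hfs⟩ := hh
    exact ⟨f, by rw [hh2, hf], hfs⟩

private lemma auxMSP_no_other_succ [Finite V] {E : Set (V × V)} {t : V}
    (hacyc : IsAcyclicDigraph E) (ht : IsTargetOf E t) (hred : RedundantFree E)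
    {u : V} (hu : (u, t) ∈ E) : ∀ w, (u, w) ∈ E → w = t := by
  intro w hw
  by_contra hwt
  obtain ⟨p, hp, hh, hl⟩ := auxMSP_reach_to_t hacyc ht w hwt
  obtain ⟨hp2, hh2, hl2⟩ := auxMSP_path_cons hp hh hw
  refine hred (u, t) ⟨hu, (u, w) :: p, hp2, ?_, ⟨(u, w), hh2, rfl⟩, ?_⟩
  · intro hmem
    rcases List.mem_cons.mp hmem with h | h
    · exact hwt (congrArg Prod.snd h).symm
    · obtain ⟨f, hf, hf1⟩ := hh
      have hrt := auxMSP_reach_head p hp.2.1 hp.2.2 f hf (u, t) h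
      rw [hf1] at hrt
      exact hacyc w (Relation.TransGen.tail' hrt hw)
  · obtain ⟨f, hf, hfs⟩ := hl
    exact ⟨f, by rw [hl2, hf], hfs⟩

end AuxMSP

/-- In a redundant-free st-DAG with at least two vertices, the edges
leaving the source form a Maximum Syncpoint, and likewise the edges entering the target. -/
theorem source_target_edges_are_msp
    {V : Type*} [Fintype V] [Nonempty V] (E : Set (V × V)) (s t : V)
    (hacyc : IsAcyclicDigraph E) (hs : IsSourceOf E s) (ht : IsTargetOf E t)
    (hred : RedundantFree E) (hcard : 2 ≤ Fintype.card V) :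
    IsMSP E {e | e ∈ E ∧ e.1 = s} ∧ IsMSP E {e | e ∈ E ∧ e.2 = t} := by
  have hsne : ∃ v : V, v ≠ s := by
    have := Fintype.exists_ne_of_one_lt_card (by omega) s
    exact this
  have htne : ∃ v : V, v ≠ t := Fintype.exists_ne_of_one_lt_card (by omega) t
  -- s has an outgoing edge
  obtain ⟨v0, hv0⟩ := hsne
  obtain ⟨p0, hp0, ⟨f0, hf0, hf0s⟩, _⟩ := auxMSP_reach_from_s hacyc hs v0 hv0
  have hw0 : (s, f0.2) ∈ E := by
    have : f0 ∈ E := hp0.2.1 f0 (List.mem_of_mem_head? (by rw [hf0]; rfl))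
    rw [← hf0s]; simpa using this
  set w0 := f0.2
  -- t has an incoming edge
  obtain ⟨v1, hv1⟩ := htne
  obtain ⟨p1, hp1, _, ⟨g1, hg1, hg1t⟩⟩ := auxMSP_reach_to_t hacyc ht v1 hv1
  have hu0 : (g1.1, t) ∈ E := by
    have : g1 ∈ E := hp1.2.1 g1 (List.mem_of_mem_getLast? (by rw [hg1]; rfl))
    rw [← hg1t]; simpa using this
  set u0 := g1.1
  have hpred : ∀ v, (s, v) ∈ E → preds E v = {s} := by
    intro v hv
    ext u
    simp only [preds, Set.mem_setOf_eq, Set.mem_singleton_iff]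
    exact ⟨fun h => auxMSP_no_other_pred hacyc hs hred hv u h, fun h => h ▸ hv⟩
  have hsucc : ∀ u, (u, t) ∈ E → succs E u = {t} := by
    intro u hu
    ext w
    simp only [succs, Set.mem_setOf_eq, Set.mem_singleton_iff]
    exact ⟨fun h => auxMSP_no_other_succ hacyc ht hred hu w h, fun h => h ▸ hu⟩
  constructor
  · -- edges out of s
    set X : Set (V × V) := {e | e ∈ E ∧ e.1 = s} with hX
    have hXE : X ⊆ E := fun e he => he.1
    have hstart : startSet X = {s} := by
      ext u
      simp only [startSet, Set.mem_setOf_eq, Set.mem_singleton_iff, hX]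
      exact ⟨fun ⟨v, hv⟩ => hv.2, fun h => ⟨w0, h ▸ hw0, h⟩⟩
    have hend : endSet X = succs E s := by
      ext v
      simp only [endSet, Set.mem_setOf_eq, hX, succs]
      exact ⟨fun ⟨u, hu, hu2⟩ => hu2 ▸ hu, fun h => ⟨s, h, rfl⟩⟩
    have hA : CondA E X := by
      refine ⟨?_, Or.inr ?_, ?_⟩
      · intro u hu v hv huv
        rw [hstart, Set.mem_singleton_iff] at hu
        exact ⟨huv, hu⟩
      · intro v hv w hw
        rw [hend] at hv hw
        rw [hpred v hv, hpred w hw]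
      · intro v hv
        rw [hend] at hv
        rw [hpred v hv, hstart]
    have hB : CondB E X := by
      refine ⟨hA.1, Or.inl (by rw [hstart]; exact Set.ncard_singleton s), ?_⟩
      intro u hu
      rw [hstart, Set.mem_singleton_iff] at hu
      subst hu
      rw [hend]
    have hsp : IsSyncpoint E X := Or.inl ⟨⟨(s, w0), hw0, rfl⟩, hXE, hA, hB⟩
    refine ⟨hsp, ?_⟩
    intro Y hY hss
    obtain ⟨hsub, hne⟩ := hss
    obtain ⟨e, heY, heX⟩ := Set.not_subset.mp hne
    have hYE : Y ⊆ E := by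
      rcases hY with ⟨_, h, _⟩ | ⟨_, h, _⟩ | ⟨_, h, _⟩ <;> exact h
    have heE : (e.1, e.2) ∈ E := by simpa using hYE heY
    have hu_ne : e.1 ≠ s := fun h => heX ⟨hYE heY, h⟩
    have hsY : (s, w0) ∈ Y := hsub ⟨hw0, rfl⟩
    have hsP : s ∈ startSet Y := ⟨w0, hsY⟩
    have huP : e.1 ∈ startSet Y := ⟨e.2, by simpa using heY⟩
    have hwS : w0 ∈ endSet Y := ⟨s, hsY⟩
    have hcontra : ∀ _ : CondA E Y, False := by
      intro ha
      have h1 := ha.2.2 w0 hwS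
      have h2 : e.1 ∈ preds E w0 := by rw [h1]; exact huP
      exact hu_ne (auxMSP_no_other_pred hacyc hs hred hw0 e.1 h2)
    have hcontrb : ∀ _ : CondB E Y, False := by
      intro hb
      have h1 : succs E s = endSet Y := hb.2.2 s hsP
      have h2 : succs E e.1 = endSet Y := hb.2.2 e.1 huP
      have h3 : e.2 ∈ succs E e.1 := heE
      rw [h2, ← h1] at h3
      exact hu_ne (auxMSP_no_other_pred hacyc hs hred h3 e.1 heE)
    rcases hY with ⟨_, _, ha, _⟩ | ⟨_, _, ha, _⟩ | ⟨_, _, hb, _⟩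
    · exact hcontra ha
    · exact hcontra ha
    · exact hcontrb hb
  · -- edges into t
    set X : Set (V × V) := {e | e ∈ E ∧ e.2 = t} with hX
    have hXE : X ⊆ E := fun e he => he.1
    have hend : endSet X = {t} := by
      ext v
      simp only [endSet, Set.mem_setOf_eq, Set.mem_singleton_iff, hX]
      exact ⟨fun ⟨u, hu⟩ => hu.2, fun h => ⟨u0, h ▸ hu0, h⟩⟩
    have hstart : startSet X = preds E t := by
      ext u
      simp only [startSet, Set.mem_setOf_eq, hX, preds]
      exact ⟨fun ⟨v, hv, hv2⟩ => hv2 ▸ hv, fun h => ⟨t, h, rfl⟩⟩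
    have hB : CondB E X := by
      refine ⟨?_, Or.inr ?_, ?_⟩
      · intro u hu v hv huv
        rw [hend, Set.mem_singleton_iff] at hv
        exact ⟨huv, hv⟩
      · intro u hu w hw
        rw [hstart] at hu hw
        rw [hsucc u hu, hsucc w hw]
      · intro u hu
        rw [hstart] at hu
        rw [hsucc u hu, hend]
    have hA : CondA E X := by
      refine ⟨hB.1, Or.inl (by rw [hend]; exact Set.ncard_singleton t), ?_⟩
      intro v hv
      rw [hend, Set.mem_singleton_iff] at hv
      subst hv
      rw [hstart]
    have hsp : IsSyncpoint E X := Or.inl ⟨⟨(u0, t), hu0, rfl⟩, hXE, hA, hB⟩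
    refine ⟨hsp, ?_⟩
    intro Y hY hss
    obtain ⟨hsub, hne⟩ := hss
    obtain ⟨e, heY, heX⟩ := Set.not_subset.mp hne
    have hYE : Y ⊆ E := by
      rcases hY with ⟨_, h, _⟩ | ⟨_, h, _⟩ | ⟨_, h, _⟩ <;> exact h
    have heE : (e.1, e.2) ∈ E := by simpa using hYE heY
    have hv_ne : e.2 ≠ t := fun h => heX ⟨hYE heY, h⟩
    have htY : (u0, t) ∈ Y := hsub ⟨hu0, rfl⟩
    have htS : t ∈ endSet Y := ⟨u0, htY⟩
    have hvS : e.2 ∈ endSet Y := ⟨e.1, by simpa using heY⟩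
    have hu0P : u0 ∈ startSet Y := ⟨t, htY⟩
    have hcontra : ∀ _ : CondA E Y, False := by
      intro ha
      have h1 := ha.2.2 t htS
      have h2 : e.1 ∈ preds E t := by rw [h1]; exact ⟨e.2, by simpa using heY⟩
      have h3 : (e.1, t) ∈ E := h2
      exact hv_ne (auxMSP_no_other_succ hacyc ht hred h3 e.2 heE)
    have hcontrb : ∀ _ : CondB E Y, False := by
      intro hb
      have h1 : succs E u0 = endSet Y := hb.2.2 u0 hu0P
      have h2 : e.2 ∈ succs E u0 := by rw [h1]; exact hvS
      exact hv_ne (auxMSP_no_other_succ hacyc ht hred hu0 e.2 h2)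
    rcases hY with ⟨_, _, _, hb⟩ | ⟨_, _, ha, _⟩ | ⟨_, _, hb, _⟩
    · exact hcontrb hb
    · exact hcontra ha
    · exact hcontrb hb
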